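/- Let E be a module over a commutative ring R with a symmetric R-bilinear form ⟨·,·⟩: E × E → R. Extend ⟨·,·⟩ to the exterior algebra Λ•E as a degree -2 operation satisfying: ⟨P,Q⟩ = -(-1)^{pq}⟨Q,P⟩ for P ∈ Λ^p E, Q ∈ Λ^q E; ⟨f,R⟩ = 0 for f of degree 0; the graded Leibniz rule ⟨P, Q∧R⟩ = ⟨P,Q⟩∧R + (-1)^{pq} Q∧⟨P,R⟩. Then for decomposable P = e_1∧...∧e_p and Q = e'_1∧...∧e'_q, one has ⟨P,Q⟩ = Σ_{s=1}^{q} Σ_{k=1}^{p} (-1)^{k-s+p+1} ⟨e_k, e'_s⟩ (e_1∧...∧ê_k∧...∧e_p) ∧ (e'_1∧...∧ê'_s∧...∧e'_q), where the hat denotes omission. -/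

import Mathlib

open ExteriorAlgebra
set_option maxHeartbeats 1000000

/-- The submodule of homogeneous `p`-vectors in the exterior algebra. -/
noncomputable def extGrade (R : Type*) [CommRing R] (E : Type*) [AddCommGroup E]
    [Module R E] (p : ℕ) : Submodule R (ExteriorAlgebra R E) :=
  LinearMap.range (ExteriorAlgebra.ι R : E →ₗ[R] ExteriorAlgebra R E) ^ p

section Aux
variable {R : Type*} [CommRing R] {E : Type*} [AddCommGroup E] [Module R E]

lemma extAux_one_mem : (1 : ExteriorAlgebra R E) ∈ extGrade R E 0 := by
  simp only [extGrade, pow_zero]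
  exact Submodule.one_le.mp le_rfl

lemma extAux_prod_mem (l : List (ExteriorAlgebra R E))
    (hl : ∀ x ∈ l, ∃ v : E, ι R v = x) :
    l.prod ∈ extGrade R E l.length := by
  induction l with
  | nil => simpa using extAux_one_mem
  | cons a l ih =>
    rw [List.prod_cons, List.length_cons]
    rw [extGrade, pow_succ']
    exact Submodule.mul_mem_mul (by obtain ⟨v, hv⟩ := hl a (by simp); exact ⟨v, hv⟩)
      (ih (fun x hx => hl x (by simp [hx])))

lemma extAux_ι_comm (x : E) (l : List (ExteriorAlgebra R E))
    (hl : ∀ y ∈ l, ∃ v : E, ι R v = y) :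
    l.prod * ι R x = ((-1 : ℤ) ^ l.length) • (ι R x * l.prod) := by
  induction l with
  | nil => simp
  | cons a l ih =>
    obtain ⟨v, rfl⟩ := hl a (by simp)
    rw [List.prod_cons, List.length_cons, mul_assoc,
      ih (fun y hy => hl y (by simp [hy])), mul_smul_comm, ← mul_assoc]
    have hswap : ι R v * ι R x = -(ι R x * ι R v) := by
      have := ι_add_mul_swap (R := R) x v
      linear_combination (norm := noncomm_ring) this
    rw [hswap, pow_succ]
    simp only [neg_mul, mul_neg, smul_neg, neg_smul, mul_one, mul_assoc,
      mul_smul_comm, smul_smul]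

lemma extAux_prod_comm (l m : List (ExteriorAlgebra R E))
    (hl : ∀ y ∈ l, ∃ v : E, ι R v = y) (hm : ∀ y ∈ m, ∃ v : E, ι R v = y) :
    l.prod * m.prod = ((-1 : ℤ) ^ (l.length * m.length)) • (m.prod * l.prod) := by
  induction m with
  | nil => simp
  | cons a m ih =>
    obtain ⟨v, hv⟩ := hm a (by simp)
    rw [List.prod_cons, List.length_cons, ← mul_assoc, ← hv,
      extAux_ι_comm v l hl, smul_mul_assoc, mul_assoc,
      ih (fun y hy => hm y (by simp [hy])), mul_smul_comm, smul_smul,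
      ← pow_add, ← mul_assoc]
    ring_nf

end Aux

lemma extAux_sign (k s p : ℕ) :
    ((Int.negOnePow ((k : ℤ) - (s : ℤ) + (p : ℤ) + 1) : ℤ)) = (-1 : ℤ) ^ (k + s + p + 1) := by
  rw [show ((k : ℤ) - (s : ℤ) + (p : ℤ) + 1) = ((k + s + p + 1 : ℕ) : ℤ) - 2 * s by
      push_cast; ring, Int.negOnePow_sub, Int.negOnePow_two_mul, mul_one,
    Int.coe_negOnePow_natCast]

lemma extAux_par (a b : ℕ) (h : a % 2 = b % 2) : ((-1 : ℤ)) ^ a = (-1) ^ b := by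
  rcases Nat.even_or_odd a with ha | ha
  · rw [ha.neg_one_pow, (Nat.even_iff.2 (h ▸ Nat.even_iff.1 ha)).neg_one_pow]
  · rw [ha.neg_one_pow, (Nat.odd_iff.2 (h ▸ Nat.odd_iff.1 ha)).neg_one_pow]

section Main
variable {R : Type*} [CommRing R] {E : Type*} [AddCommGroup E] [Module R E]
    (bil : E →ₗ[R] E →ₗ[R] R)
    (B : ExteriorAlgebra R E → ExteriorAlgebra R E → ExteriorAlgebra R E)
    (hbase : ∀ e e' : E, B (ι R e) (ι R e')
      = algebraMap R (ExteriorAlgebra R E) (bil e e'))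
    (hskew : ∀ (p q : ℕ) (x y : ExteriorAlgebra R E),
      x ∈ extGrade R E p → y ∈ extGrade R E q →
      B x y = (-((-1 : ℤ) ^ (p * q))) • B y x)
    (hzero : ∀ (f : R) (x : ExteriorAlgebra R E),
      B (algebraMap R (ExteriorAlgebra R E) f) x = 0)
    (hleib : ∀ (p q : ℕ) (x y z : ExteriorAlgebra R E),
      x ∈ extGrade R E p → y ∈ extGrade R E q →
      B x (y * z) = B x y * z + ((-1 : ℤ) ^ (p * q)) • (y * B x z))

include hbase hskew hzero hleib in
lemma extAux_step1 : ∀ (q : ℕ) (x : E) (e' : Fin q → E),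
    B (ι R x) (List.ofFn fun i => ι R (e' i)).prod
      = ∑ s : Fin q, ((-1 : ℤ) ^ (s : ℕ)) •
          (bil x (e' s) • ((List.ofFn fun i => ι R (e' i)).eraseIdx s).prod) := by
  intro q
  induction q with
  | zero =>
    intro x e'
    have hι : ι R x ∈ extGrade R E 1 := by
      simpa [extGrade, pow_one] using ⟨x, rfl⟩
    have : (List.ofFn fun i : Fin 0 => ι R (e' i)).prod = 1 := by simp
    rw [this, hskew 1 0 _ _ hι extAux_one_mem, show (1 : ExteriorAlgebra R E)
      = algebraMap R _ 1 from (map_one _).symm, hzero]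
    simp
  | succ q ih =>
    intro x e'
    have hι : ∀ v : E, ι R v ∈ extGrade R E 1 := fun v => by
      simpa [extGrade, pow_one] using ⟨v, rfl⟩
    rw [List.ofFn_succ, List.prod_cons,
      hleib 1 1 _ _ _ (hι x) (hι (e' 0)), hbase, ih x (fun i => e' i.succ),
      Fin.sum_univ_succ]
    simp only [Fin.val_zero, pow_zero, one_smul, Fin.val_succ,
      List.eraseIdx_cons_zero, List.eraseIdx_cons_succ, List.prod_cons,
      Finset.mul_sum, mul_smul_comm, smul_smul, pow_one, one_mul, pow_succ,
      ← Algebra.smul_def]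
    congr 1
    rw [Finset.smul_sum]
    exact Finset.sum_congr rfl fun s _ => by rw [smul_smul, mul_comm]

end Main

lemma extAux_negpow (a : ℕ) : -(-1 : ℤ) ^ a = (-1) ^ (a + 1) := by
  rw [pow_succ]; ring

lemma extAux_par' (a b : ℕ) (h : Even (a + b)) : ((-1 : ℤ)) ^ a = (-1) ^ b := by
  rcases Nat.even_or_odd a with ha | ha
  · rw [ha.neg_one_pow, ((Nat.even_add.mp h).1 ha).neg_one_pow]
  · have hb : Odd b := by
      rcases Nat.even_or_odd b with hb | hb
      · exact absurd ((Nat.even_add.mp h).2 hb) (Nat.not_even_iff_odd.2 ha)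
      · exact hb
    rw [ha.neg_one_pow, hb.neg_one_pow]

section Aux2
variable {R : Type*} [CommRing R] {E : Type*} [AddCommGroup E] [Module R E]

lemma extAux_zsmul_rsmul (z : ℤ) (r : R) (x : ExteriorAlgebra R E) :
    z • (r • x) = r • (z • x) := smul_comm z r x

end Aux2

/-- Lemma 4.1: the extension of a symmetric bilinear form `⟨·,·⟩` on `E`
to the exterior algebra `Λ•E` as a degree `-2` operation satisfying graded
skew-symmetry, vanishing on degree `0`, and the graded Leibniz rule, is given on
decomposables by the explicit double-sum formula. -/
theorem extended_bilinear_form_explicit_formula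
    {R : Type*} [CommRing R] {E : Type*} [AddCommGroup E] [Module R E]
    (bil : E →ₗ[R] E →ₗ[R] R) (hsymm : ∀ e e', bil e e' = bil e' e)
    (B : ExteriorAlgebra R E → ExteriorAlgebra R E → ExteriorAlgebra R E)
    (hadd₁ : ∀ x y z, B (x + y) z = B x z + B y z)
    (hadd₂ : ∀ x y z, B x (y + z) = B x y + B x z)
    -- `B` extends the bilinear form:
    (hbase : ∀ e e' : E, B (ι R e) (ι R e')
      = algebraMap R (ExteriorAlgebra R E) (bil e e'))
    -- degree `-2`:
    (hdeg : ∀ (p q : ℕ) (x y : ExteriorAlgebra R E),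
      x ∈ extGrade R E p → y ∈ extGrade R E q → B x y ∈ extGrade R E (p + q - 2))
    -- graded skew-symmetry `⟨P,Q⟩ = -(-1)^{pq}⟨Q,P⟩`:
    (hskew : ∀ (p q : ℕ) (x y : ExteriorAlgebra R E),
      x ∈ extGrade R E p → y ∈ extGrade R E q →
      B x y = (-((-1 : ℤ) ^ (p * q))) • B y x)
    -- `⟨f, R⟩ = 0` in degree `0`:
    (hzero : ∀ (f : R) (x : ExteriorAlgebra R E),
      B (algebraMap R (ExteriorAlgebra R E) f) x = 0)
    -- graded Leibniz rule `⟨P, Q∧R⟩ = ⟨P,Q⟩∧R + (-1)^{pq} Q∧⟨P,R⟩`: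
    (hleib : ∀ (p q : ℕ) (x y z : ExteriorAlgebra R E),
      x ∈ extGrade R E p → y ∈ extGrade R E q →
      B x (y * z) = B x y * z + ((-1 : ℤ) ^ (p * q)) • (y * B x z)) :
    ∀ (p q : ℕ) (e : Fin p → E) (e' : Fin q → E),
      B (List.ofFn fun i => ι R (e i)).prod (List.ofFn fun i => ι R (e' i)).prod
        = ∑ s : Fin q, ∑ k : Fin p,
            ((Int.negOnePow ((k : ℤ) - (s : ℤ) + (p : ℤ) + 1) : ℤ)) •
              (bil (e k) (e' s) •
                (((List.ofFn fun i => ι R (e i)).eraseIdx k).prod *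
                  ((List.ofFn fun i => ι R (e' i)).eraseIdx s).prod)) := by
  have hι : ∀ v : E, ι R v ∈ extGrade R E 1 := fun v => by
    simpa [extGrade, pow_one] using ⟨v, rfl⟩
  have hmem : ∀ (n : ℕ) (f : Fin n → E),
      ∀ x ∈ (List.ofFn fun i => ι R (f i)), ∃ v : E, ι R v = x := by
    intro n f x hx
    obtain ⟨i, rfl⟩ := List.mem_ofFn.1 hx
    exact ⟨f i, rfl⟩
  have hgrade : ∀ (n : ℕ) (f : Fin n → E),
      (List.ofFn fun i => ι R (f i)).prod ∈ extGrade R E n := by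
    intro n f
    simpa using extAux_prod_mem (List.ofFn fun i => ι R (f i)) (hmem n f)
  have hBone : ∀ (n : ℕ) (x : ExteriorAlgebra R E), x ∈ extGrade R E n → B x 1 = 0 := by
    intro n x hx
    rw [hskew n 0 _ _ hx extAux_one_mem,
      show (1 : ExteriorAlgebra R E) = algebraMap R _ 1 from (map_one _).symm,
      hzero, smul_zero]
  have hs1 := extAux_step1 bil B hbase hskew hzero hleib
  intro p q e e'
  cases q with
  | zero => simpa using hBone p _ (hgrade p e)
  | succ q =>
    induction p with
    | zero =>
      rw [show (List.ofFn fun i : Fin 0 => ι R (e i)).prod = algebraMap R _ 1 by simp,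
        hzero]
      simp
    | succ p ih =>
      have hP' : (List.ofFn fun i : Fin p => ι R (e i.succ)).prod ∈ extGrade R E p :=
        hgrade p _
      have hQ : (List.ofFn fun i : Fin (q+1) => ι R (e' i)).prod ∈ extGrade R E (q+1) :=
        hgrade _ e'
      have hPg : (ι R (e 0) * (List.ofFn fun i : Fin p => ι R (e i.succ)).prod)
          ∈ extGrade R E (p+1) := by
        have := hgrade (p+1) e
        rwa [List.ofFn_succ, List.prod_cons] at this
      have hhead : (List.ofFn fun i : Fin (p+1) => ι R (e i)).prod
          = ι R (e 0) * (List.ofFn fun i : Fin p => ι R (e i.succ)).prod := by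
        rw [List.ofFn_succ, List.prod_cons]
      have hcomm : ∀ s : Fin (q+1),
          ((List.ofFn fun i => ι R (e' i)).eraseIdx ↑s).prod
              * (List.ofFn fun i : Fin p => ι R (e i.succ)).prod
            = ((-1 : ℤ) ^ (q * p)) • ((List.ofFn fun i : Fin p => ι R (e i.succ)).prod
              * ((List.ofFn fun i => ι R (e' i)).eraseIdx ↑s).prod) := by
        intro s
        have hsub : ∀ y ∈ (List.ofFn fun i => ι R (e' i)).eraseIdx ↑s, ∃ v : E, ι R v = y :=
          fun y hy => hmem _ e' y (List.eraseIdx_subset hy)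
        have hlen : ((List.ofFn fun i => ι R (e' i)).eraseIdx ↑s).length = q := by
          rw [List.length_eraseIdx]
          simp [s.isLt]
        have := extAux_prod_comm _ (List.ofFn fun i : Fin p => ι R (e i.succ))
          hsub (hmem p _)
        rw [hlen] at this
        simpa using this
      rw [hhead, hskew (p+1) (q+1) _ _ hPg hQ,
        hleib (q+1) 1 _ (ι R (e 0)) _ hQ (hι (e 0)),
        hskew (q+1) 1 _ (ι R (e 0)) hQ (hι (e 0)),
        hs1 (q+1) (e 0) e',
        hskew (q+1) p _ _ hQ hP',
        ih (fun i => e i.succ)]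
      have herase0 : (List.ofFn fun i : Fin (p+1) => ι R (e i)).eraseIdx 0
          = List.ofFn fun i : Fin p => ι R (e i.succ) := by
        simp [List.ofFn_succ]
      have heraseS : ∀ n : ℕ, (List.ofFn fun i : Fin (p+1) => ι R (e i)).eraseIdx (n+1)
          = ι R (e 0) :: ((List.ofFn fun i : Fin p => ι R (e i.succ)).eraseIdx n) := by
        intro n; simp [List.ofFn_succ]
      simp only [extAux_sign]
      simp only [Fin.sum_univ_succ (n := p)]
      rw [Finset.sum_add_distrib]
      simp only [Fin.val_zero, Fin.val_succ, herase0, heraseS, List.prod_cons,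
        Finset.smul_sum, Finset.sum_mul, Finset.mul_sum, smul_mul_assoc,
        mul_smul_comm, hcomm, extAux_zsmul_rsmul, smul_smul, mul_assoc, smul_add]
      congr 1
      · refine Finset.sum_congr rfl fun s _ => ?_
        refine congrArg _ ?_
        congr 1
        simp only [neg_mul, mul_neg, neg_neg, one_mul, mul_one, ← pow_add]
        refine extAux_par' _ _ ?_
        simp only [Nat.even_add, Nat.even_mul, Nat.even_add_one]
        tauto
      · refine Finset.sum_congr rfl fun s _ => Finset.sum_congr rfl fun k _ => ?_
        refine congrArg _ ?_
        congr 1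
        simp only [neg_mul, mul_neg, neg_neg, one_mul, mul_one, ← pow_add]
        refine extAux_par' _ _ ?_
        simp only [Nat.even_add, Nat.even_mul, Nat.even_add_one]
        tauto
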